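/- Let C ⊆ ℕ and suppose that for every q ≥ 2, #{ n ∈ C : q ∤ n } > Σ_{r < q, r ∣ q} (q/r − 2). Then FS(C) + qℤ = ℤ for every q ∈ ℕ, i.e., finite sums of elements of C cover all residue classes modulo every q. -/

import Mathlib

open Finset

private def sumsMod (q : ℕ) (A : Finset ℕ) : Finset (ZMod q) :=
  A.powerset.image (fun J : Finset ℕ => ∑ n ∈ J, (n : ZMod q))

private lemma mem_sumsMod {q : ℕ} {A : Finset ℕ} {x : ZMod q} :
    x ∈ sumsMod q A ↔ ∃ J, J ⊆ A ∧ ∑ n ∈ J, (n : ZMod q) = x := by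
  simp [sumsMod]

private lemma sumsMod_mono {q : ℕ} {A B : Finset ℕ} (h : A ⊆ B) :
    sumsMod q A ⊆ sumsMod q B := by
  intro x hx
  rw [mem_sumsMod] at hx ⊢
  obtain ⟨J, hJ, rfl⟩ := hx
  exact ⟨J, hJ.trans h, rfl⟩

private lemma closure_int {q : ℕ} {T : Finset (ZMod q)} {α : ZMod q}
    (hst : ∀ x ∈ T, x + α ∈ T) (z : ℤ) : ∀ x ∈ T, x + (z : ZMod q) * α ∈ T := by
  have himg : T.image (· + α) = T := by
    apply Finset.eq_of_subset_of_card_le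
    · intro y hy
      obtain ⟨x, hx, rfl⟩ := Finset.mem_image.1 hy
      exact hst x hx
    · exact le_of_eq (Finset.card_image_of_injective T (add_left_injective α)).symm
  have hback : ∀ x ∈ T, x - α ∈ T := by
    intro x hx
    rw [← himg] at hx
    obtain ⟨y, hy, hyx⟩ := Finset.mem_image.1 hx
    rw [← hyx]
    simpa using hy
  induction z using Int.induction_on with
  | zero => intro x hx; simpa using hx
  | succ n ih =>
      intro x hx
      have h1 := hst _ (ih x hx)
      have h2 : x + ((n : ℤ) : ZMod q) * α + α = x + (((n : ℤ) + 1 : ℤ) : ZMod q) * α := by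
        push_cast; ring
      rwa [h2] at h1
  | pred n ih =>
      intro x hx
      have h1 := hback _ (ih x hx)
      have h2 : x + ((-(n : ℤ) : ℤ) : ZMod q) * α - α = x + ((-(n : ℤ) - 1 : ℤ) : ZMod q) * α := by
        push_cast; ring
      rwa [h2] at h1

private lemma sub_two_le_bound {q : ℕ} (hq : 2 ≤ q) :
    q - 2 ≤ ∑ r ∈ q.divisors.filter (· < q), (q / r - 2) := by
  have h1 : (1 : ℕ) ∈ q.divisors.filter (· < q) := by
    simp only [Finset.mem_filter, Nat.one_mem_divisors]
    omega
  have := Finset.single_le_sum (f := fun r => q / r - 2) (fun i _ => Nat.zero_le _) h1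
  simpa using this

/-- If for every `q ≥ 2` the number of elements of `C` not divisible by `q` exceeds
`∑_{r < q, r ∣ q} (q/r - 2)`, then finite sums of elements of `C` cover all residue
classes modulo every `q ≥ 1`. -/
theorem stmt4 (C : Set ℕ)
    (h : ∀ q : ℕ, 2 ≤ q → ∃ F : Finset ℕ, ↑F ⊆ {n ∈ C | ¬ q ∣ n} ∧
      (∑ r ∈ q.divisors.filter (· < q), (q / r - 2)) < F.card) :
    ∀ q : ℕ, 1 ≤ q → ∀ m : ℤ, ∃ F : Finset ℕ, ↑F ⊆ C ∧ F.Nonempty ∧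
      (q : ℤ) ∣ m - ∑ n ∈ F, (n : ℤ) := by
  -- C is infinite
  have hCinf : C.Infinite := by
    by_contra hfin
    rw [Set.not_infinite] at hfin
    obtain ⟨F, hFsub, hFcard⟩ := h (hfin.toFinset.card + 2) (by omega)
    have hb := sub_two_le_bound (q := hfin.toFinset.card + 2) (by omega)
    have hsub : F ⊆ hfin.toFinset := fun x hx => (Set.Finite.mem_toFinset hfin).2 ((hFsub hx).1)
    have := Finset.card_le_card hsub
    omega
  intro q
  induction q using Nat.strong_induction_on with
  | _ q IH =>
  intro hq m
  rcases eq_or_lt_of_le hq with h1 | h2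
  · -- q = 1
    obtain ⟨c, hc⟩ := hCinf.nonempty
    exact ⟨{c}, by simpa, Finset.singleton_nonempty c, by rw [← h1]; exact one_dvd _⟩
  · -- q ≥ 2
    haveI : NeZero q := ⟨by omega⟩
    obtain ⟨F₀, hF₀sub, hF₀card⟩ := h q h2
    have hk : q - 1 ≤ F₀.card := by
      have hb := sub_two_le_bound h2
      omega
    by_cases hstuck : ∃ A : Finset ℕ, ↑A ⊆ {n ∈ C | ¬ q ∣ n} ∧ ∃ a ∈ {n ∈ C | ¬ q ∣ n},
        a ∉ A ∧ ∀ x ∈ sumsMod q A, x + (a : ZMod q) ∈ sumsMod q A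
    · -- Case I : a stuck pair exists
      obtain ⟨A, hA, a, ha, haA, hst⟩ := hstuck
      obtain ⟨haC, hand⟩ := ha
      have hq0 : 0 < q := by omega
      have hrq : Nat.gcd a q ∣ q := Nat.gcd_dvd_right a q
      have hr0 : 0 < Nat.gcd a q := Nat.gcd_pos_of_pos_right a hq0
      have hrlt : Nat.gcd a q < q := by
        rcases (Nat.le_of_dvd hq0 hrq).lt_or_eq with hlt | heq
        · exact hlt
        · exact absurd (heq ▸ Nat.gcd_dvd_left a q) hand
      obtain ⟨G, hG, -, w, hw⟩ := IH (Nat.gcd a q) hrlt hr0 m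
      -- Bezout
      have hbez : ((Nat.gcd a q : ℕ) : ZMod q) = ((Nat.gcdA a q : ℤ) : ZMod q) * (a : ZMod q) := by
        have hb := Nat.gcd_eq_gcd_ab a q
        have h3 := congrArg (fun z : ℤ => (z : ZMod q)) hb
        push_cast at h3
        rw [ZMod.natCast_self] at h3
        linear_combination h3
      have e1 : (m : ZMod q) - ∑ n ∈ G, (n : ZMod q)
          = ((w * Nat.gcdA a q : ℤ) : ZMod q) * (a : ZMod q) := by
        have h3 := congrArg (fun z : ℤ => (z : ZMod q)) hw
        push_cast at h3 ⊢
        linear_combination h3 + (w : ZMod q) * hbez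
      have e2 : (∑ n ∈ G ∩ insert a A, (n : ZMod q)) + ∑ n ∈ G \ insert a A, (n : ZMod q)
          = ∑ n ∈ G, (n : ZMod q) := Finset.sum_inter_add_sum_sdiff G (insert a A) _
      -- the sum of E is in sumsMod q A
      have hSE : (∑ n ∈ G ∩ insert a A, (n : ZMod q)) ∈ sumsMod q A := by
        by_cases haE : a ∈ G ∩ insert a A
        · have hsub : (G ∩ insert a A).erase a ⊆ A := by
            intro x hx
            obtain ⟨hxa, hxE⟩ := Finset.mem_erase.1 hx
            rcases Finset.mem_insert.1 (Finset.mem_inter.1 hxE).2 with hh | hh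
            · exact absurd hh hxa
            · exact hh
          have hmem : (∑ n ∈ (G ∩ insert a A).erase a, (n : ZMod q)) ∈ sumsMod q A :=
            mem_sumsMod.2 ⟨_, hsub, rfl⟩
          have := hst _ hmem
          rwa [Finset.sum_erase_add _ _ haE] at this
        · have hsub : G ∩ insert a A ⊆ A := by
            intro x hx
            rcases Finset.mem_insert.1 (Finset.mem_inter.1 hx).2 with hh | hh
            · exact absurd (hh ▸ hx) haE
            · exact hh
          exact mem_sumsMod.2 ⟨_, hsub, rfl⟩
      have h0 : (m : ZMod q) - ∑ n ∈ G \ insert a A, (n : ZMod q)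
          = (∑ n ∈ G ∩ insert a A, (n : ZMod q))
            + ((w * Nat.gcdA a q : ℤ) : ZMod q) * (a : ZMod q) := by
        linear_combination e1 - e2
      have hTt : (m : ZMod q) - ∑ n ∈ G \ insert a A, (n : ZMod q) ∈ sumsMod q A := by
        rw [h0]
        exact closure_int hst _ _ hSE
      have hstep := closure_int hst (-1) _ hTt
      have h4 : ((m : ZMod q) - ∑ n ∈ G \ insert a A, (n : ZMod q)) + ((-1 : ℤ) : ZMod q) * (a : ZMod q)
          = ((m : ZMod q) - ∑ n ∈ G \ insert a A, (n : ZMod q)) - (a : ZMod q) := by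
        push_cast; ring
      rw [h4] at hstep
      obtain ⟨J', hJ'A, hSJ'⟩ := mem_sumsMod.1 hstep
      have haJ' : a ∉ J' := fun hh => haA (hJ'A hh)
      have hdisj : Disjoint (G \ insert a A) (insert a J') := by
        rw [Finset.disjoint_left]
        intro x hxG hxJ
        have hxA' : x ∈ insert a A := by
          rcases Finset.mem_insert.1 hxJ with rfl | hx
          · exact Finset.mem_insert_self _ _
          · exact Finset.mem_insert_of_mem (hJ'A hx)
        exact (Finset.mem_sdiff.1 hxG).2 hxA'
      refine ⟨(G \ insert a A) ∪ insert a J', ?_, ⟨a, by simp⟩, ?_⟩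
      · intro x hx
        rcases Finset.mem_union.1 hx with hx | hx
        · exact hG (Finset.mem_sdiff.1 hx).1
        · rcases Finset.mem_insert.1 hx with rfl | hx
          · exact haC
          · exact (hA (hJ'A hx)).1
      · rw [← ZMod.intCast_zmod_eq_zero_iff_dvd]
        push_cast
        rw [Finset.sum_union hdisj, Finset.sum_insert haJ']
        linear_combination -hSJ'
    · -- Case II : no stuck pair
      push_neg at hstuck
      have hcard : ∀ A : Finset ℕ, ↑A ⊆ {n ∈ C | ¬ q ∣ n} → min q (A.card + 1) ≤ (sumsMod q A).card := by
        intro A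
        induction A using Finset.induction_on with
        | empty =>
            intro _
            have : sumsMod q (∅ : Finset ℕ) = {0} := by simp [sumsMod]
            rw [this]
            simp
        | @insert a s ha ih =>
            intro hsub
            have hsubA : ↑s ⊆ {n ∈ C | ¬ q ∣ n} := fun x hx => hsub (by simp [hx])
            have haCq : a ∈ {n ∈ C | ¬ q ∣ n} := hsub (by simp)
            rcases le_or_gt q (sumsMod q s).card with hq' | hq'
            · exact le_trans (le_trans (min_le_left _ _) hq')
                (Finset.card_le_card (sumsMod_mono (Finset.subset_insert a s)))
            · obtain ⟨x, hx, hxa⟩ := hstuck s hsubA a haCq ha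
              have hx' : x + (a : ZMod q) ∈ sumsMod q (insert a s) := by
                obtain ⟨J, hJ, rfl⟩ := mem_sumsMod.1 hx
                refine mem_sumsMod.2 ⟨insert a J, Finset.insert_subset_insert a hJ, ?_⟩
                rw [Finset.sum_insert (fun hh => ha (hJ hh))]
                ring
              have hsubset : insert (x + (a : ZMod q)) (sumsMod q s) ⊆ sumsMod q (insert a s) := by
                intro y hy
                rcases Finset.mem_insert.1 hy with rfl | hy
                · exact hx'
                · exact sumsMod_mono (Finset.subset_insert _ _) hy
              have hcard1 : (sumsMod q s).card + 1 ≤ (sumsMod q (insert a s)).card := by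
                calc (sumsMod q s).card + 1
                    = (insert (x + (a : ZMod q)) (sumsMod q s)).card :=
                      (Finset.card_insert_of_notMem hxa).symm
                  _ ≤ _ := Finset.card_le_card hsubset
              have h2' := ih hsubA
              rw [Finset.card_insert_of_notMem ha]
              omega
      have hFcard : q ≤ (sumsMod q F₀).card := by
        have := hcard F₀ hF₀sub
        omega
      have huniv : sumsMod q F₀ = Finset.univ := by
        apply Finset.eq_univ_of_card
        have hle := Finset.card_le_univ (sumsMod q F₀)
        rw [ZMod.card] at hle ⊢
        omega
      obtain ⟨c, hcC, hcF⟩ := hCinf.exists_notMem_finset F₀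
      have hqc : q ∣ c := by
        by_contra hnd
        obtain ⟨x, hx, hxa⟩ := hstuck F₀ hF₀sub c ⟨hcC, hnd⟩ hcF
        exact hxa (huniv ▸ Finset.mem_univ _)
      have hm : (m : ZMod q) ∈ sumsMod q F₀ := huniv ▸ Finset.mem_univ _
      obtain ⟨J, hJ, hSJ⟩ := mem_sumsMod.1 hm
      have hcJ : c ∉ J := fun hh => hcF (hJ hh)
      refine ⟨insert c J, ?_, ⟨c, Finset.mem_insert_self _ _⟩, ?_⟩
      · intro x hx
        rcases Finset.mem_insert.1 hx with rfl | hx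
        · exact hcC
        · exact (hF₀sub (hJ hx)).1
      · rw [← ZMod.intCast_zmod_eq_zero_iff_dvd]
        push_cast
        rw [Finset.sum_insert hcJ]
        have hc0 : (c : ZMod q) = 0 := (ZMod.natCast_eq_zero_iff c q).2 hqc
        rw [hc0]
        linear_combination -hSJ
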